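/- Let Φ be a basic read-once formula and σ an assignment. If there is no (ε,σ)-critical vertex, then σ is (2ε/3)-close to SAT(Φ). -/

import Mathlib

/-- Read-once formula trees over variable set `X`: leaves are variables (possibly
negated), internal nodes are `∧`/`∨` gates of unbounded arity or general Boolean
gates given by a function on the list of children values. -/
inductive Fla (X : Type) where
  | leaf : X → Fla X
  | neg : X → Fla X
  | and : List (Fla X) → Fla X
  | or : List (Fla X) → Fla X
  | gate : (List Bool → Bool) → List (Fla X) → Fla X

namespace Fla
variable {X : Type}

/-- Evaluation of a formula under an assignment. -/
def eval (σ : X → Bool) : Fla X → Bool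
  | leaf x => σ x
  | neg x => !σ x
  | and l => l.attach.all (fun ⟨φ, _⟩ => eval σ φ)
  | or l => l.attach.any (fun ⟨φ, _⟩ => eval σ φ)
  | gate f l => f (l.attach.map (fun ⟨φ, _⟩ => eval σ φ))

/-- The list of variables occurring in a formula (with multiplicity). -/
def vars : Fla X → List X
  | leaf x => [x]
  | neg x => [x]
  | and l => l.attach.flatMap (fun ⟨φ, _⟩ => vars φ)
  | or l => l.attach.flatMap (fun ⟨φ, _⟩ => vars φ)
  | gate _ l => l.attach.flatMap (fun ⟨φ, _⟩ => vars φ)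

/-- The size `|Φ|` of a formula: the number of (occurrences of) variables. -/
def size (φ : Fla X) : ℕ := (vars φ).length

/-- A formula is read-once when no variable occurs twice. -/
def ReadOnce (φ : Fla X) : Prop := (vars φ).Nodup

/-- Relative Hamming distance between two assignments, measured over the
variables of `φ`. -/
noncomputable def hamming (φ : Fla X) (σ σ' : X → Bool) : ℝ :=
  ((vars φ).countP (fun x => σ x != σ' x) : ℝ) / (size φ : ℝ)

/-- `σ` is `ε`-far from making `φ` evaluate to `b`. -/
def EpsFar (φ : Fla X) (b : Bool) (σ : X → Bool) (ε : ℝ) : Prop :=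
  ∀ σ', eval σ' φ = b → ε ≤ hamming φ σ σ'

/-- `σ` is `ε`-close to making `φ` evaluate to `b`. -/
def EpsClose (φ : Fla X) (b : Bool) (σ : X → Bool) (ε : ℝ) : Prop :=
  ∃ σ', eval σ' φ = b ∧ hamming φ σ σ' ≤ ε

/-- The children of the root. -/
def children : Fla X → List (Fla X)
  | and l => l
  | or l => l
  | gate _ l => l
  | _ => []

def isAnd : Fla X → Prop
  | and _ => True
  | _ => False

def isOr : Fla X → Prop
  | or _ => True
  | _ => False

/-- The `i`-th input of the `n`-ary gate `f` is `(a,b)`-forceful. -/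
def Forceful (f : List Bool → Bool) (n i : ℕ) : Prop :=
  ∃ a b : Bool, ∀ l : List Bool, l.length = n → l[i]? = some a → f l = b

/-- An `n`-ary gate is unforceable if no input is forceful. -/
def Unforceable (f : List Bool → Bool) (n : ℕ) : Prop :=
  ∀ i < n, ¬ Forceful f n i

/-- `k`-`x`-basic formulas. -/
inductive KxBasic (k : ℕ) : Fla X → Prop where
  | leaf (x : X) : KxBasic k (.leaf x)
  | neg (x : X) : KxBasic k (.neg x)
  | and (l : List (Fla X)) : 2 ≤ l.length → (∀ φ ∈ l, KxBasic k φ) →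
      (∀ φ ∈ l, ¬ isAnd φ) → KxBasic k (.and l)
  | or (l : List (Fla X)) : 2 ≤ l.length → (∀ φ ∈ l, KxBasic k φ) →
      (∀ φ ∈ l, ¬ isOr φ) → KxBasic k (.or l)
  | gate (f : List Bool → Bool) (l : List (Fla X)) : 2 ≤ l.length → l.length ≤ k →
      Unforceable f l.length → (∀ φ ∈ l, KxBasic k φ) → KxBasic k (.gate f l)

/-- Basic formulas: only `∧`/`∨` gates, alternating, negations at leaves. -/
inductive BasicF : Fla X → Prop where
  | leaf (x : X) : BasicF (.leaf x)
  | neg (x : X) : BasicF (.neg x)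
  | and (l : List (Fla X)) : 2 ≤ l.length → (∀ φ ∈ l, BasicF φ) →
      (∀ φ ∈ l, ¬ isAnd φ) → BasicF (.and l)
  | or (l : List (Fla X)) : 2 ≤ l.length → (∀ φ ∈ l, BasicF φ) →
      (∀ φ ∈ l, ¬ isOr φ) → BasicF (.or l)

end Fla

namespace Fla
variable {X : Type}

/-- The vertex of the formula tree reached by following the path `p` of child
indices from the root, if it exists, given as the subformula rooted there. -/
def subAt : Fla X → List ℕ → Option (Fla X)
  | φ, [] => some φ
  | φ, i :: p =>
    match (children φ)[i]? with
    | some c => subAt c p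
    | none => none

end Fla

namespace Fla
variable {X : Type}

/-- A vertex (given by the path `p` from the root) is `(ε,σ)`-important:
`σ` does not satisfy `Φ`, and for every vertex `u` on the root-to-`v` path,
`σ` is `(2ε/3)(1+2ε/3)^{⌊depth(u)/3⌋}`-far from satisfying `Φ_u`, and if `u` is
an `∨`-vertex other than `v` itself then the path continues from `u` through a
heaviest child of `u`. -/
def Important (Φ : Fla X) (σ : X → Bool) (ε : ℝ) (p : List ℕ) : Prop :=
  (∃ ψ, subAt Φ p = some ψ) ∧
  eval σ Φ = false ∧
  ∀ q : List ℕ, q <+: p →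
    (∀ ψ, subAt Φ q = some ψ →
      EpsFar ψ true σ ((2 * ε / 3) * (1 + 2 * ε / 3) ^ (q.length / 3))) ∧
    (q ≠ p → ∀ l, subAt Φ q = some (Fla.or l) →
      ∃ i rest c, p = q ++ i :: rest ∧ l[i]? = some c ∧ ∀ w ∈ l, size w ≤ size c)

/-- A vertex is `(ε,σ)`-critical if it is `(ε,σ)`-important and is a leaf
labelled by a variable. -/
def Critical (Φ : Fla X) (σ : X → Bool) (ε : ℝ) (p : List ℕ) : Prop :=
  Important Φ σ ε p ∧
  ∃ x : X, subAt Φ p = some (Fla.leaf x) ∨ subAt Φ p = some (Fla.neg x)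

end Fla

namespace Fla
variable {X : Type}

lemma vars_and' (l : List (Fla X)) : vars (.and l) = l.flatMap vars := by
  rw [vars]
  conv_rhs => rw [← List.attach_map_subtype_val l, List.flatMap_map]

lemma vars_or' (l : List (Fla X)) : vars (.or l) = l.flatMap vars := by
  rw [vars]
  conv_rhs => rw [← List.attach_map_subtype_val l, List.flatMap_map]

lemma eval_and' (σ : X → Bool) (l : List (Fla X)) :
    eval σ (.and l) = l.all (fun c => eval σ c) := by
  rw [Bool.eq_iff_iff]
  simp only [eval, List.all_eq_true, List.mem_attach, true_implies, Subtype.forall]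

lemma eval_or' (σ : X → Bool) (l : List (Fla X)) :
    eval σ (.or l) = l.any (fun c => eval σ c) := by
  rw [Bool.eq_iff_iff]
  simp only [eval, List.any_eq_true, List.mem_attach, true_and, Subtype.exists]
  tauto

lemma size_and' (l : List (Fla X)) : size (.and l) = (l.map size).sum := by
  rw [size, vars_and', List.length_flatMap]; rfl

lemma size_or' (l : List (Fla X)) : size (.or l) = (l.map size).sum := by
  rw [size, vars_or', List.length_flatMap]; rfl

lemma size_pos' {φ : Fla X} (hb : BasicF φ) : 0 < size φ := by
  induction hb with
  | leaf x => simp [size, vars]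
  | neg x => simp [size, vars]
  | and l hlen hbs hna ih =>
    rw [size_and']
    match l, hlen with
    | c :: t, _ =>
      have := ih c (by simp)
      simp only [List.map_cons, List.sum_cons]
      omega
  | or l hlen hbs hno ih =>
    rw [size_or']
    match l, hlen with
    | c :: t, _ =>
      have := ih c (by simp)
      simp only [List.map_cons, List.sum_cons]
      omega

lemma allCongr {α : Type*} {l : List α} {p q : α → Bool} (h : ∀ a ∈ l, p a = q a) :
    l.all p = l.all q := by
  induction l with
  | nil => rfl
  | cons a t ih =>
    simp only [List.all_cons, h a (by simp), ih fun b hb => h b (by simp [hb])]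

lemma eval_congr' {φ : Fla X} (hb : BasicF φ) {σ τ : X → Bool}
    (h : ∀ x ∈ vars φ, σ x = τ x) : eval σ φ = eval τ φ := by
  induction hb with
  | leaf x => simpa [eval] using h x (by simp [vars])
  | neg x => have := h x (by simp [vars]); simp [eval, this]
  | and l hlen hbs hna ih =>
    rw [eval_and', eval_and']
    exact allCongr fun c hc => ih c hc fun x hx =>
      h x (by rw [vars_and']; exact List.mem_flatMap.2 ⟨c, hc, hx⟩)
  | or l hlen hbs hno ih =>
    rw [eval_or', eval_or']
    have : ∀ c ∈ l, eval σ c = eval τ c := fun c hc => ih c hc fun x hx =>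
      h x (by rw [vars_or']; exact List.mem_flatMap.2 ⟨c, hc, hx⟩)
    rw [Bool.eq_iff_iff]
    simp only [List.any_eq_true]
    constructor
    · rintro ⟨c, hc, he⟩; exact ⟨c, hc, (this c hc) ▸ he⟩
    · rintro ⟨c, hc, he⟩; exact ⟨c, hc, (this c hc) ▸ he⟩

lemma nodup_child {l : List (Fla X)} (h : (l.flatMap vars).Nodup) {c : Fla X} (hc : c ∈ l) :
    (vars c).Nodup := by
  induction l with
  | nil => cases hc
  | cons a t ih =>
    rw [List.flatMap_cons] at h
    rcases List.mem_cons.1 hc with rfl | hc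
    · exact h.of_append_left
    · exact ih h.of_append_right hc

end Fla
namespace Fla
variable {X : Type}

lemma epsFar_mono {φ : Fla X} {b : Bool} {σ : X → Bool} {δ δ' : ℝ}
    (h : δ' ≤ δ) (hf : EpsFar φ b σ δ) : EpsFar φ b σ δ' :=
  fun σ' hs => h.trans (hf σ' hs)

lemma combine' (σ : X → Bool) (f : Fla X → (X → Bool)) (l : List (Fla X))
    (hnd : (l.flatMap vars).Nodup) :
    ∃ τ : X → Bool, (∀ c ∈ l, ∀ x ∈ vars c, τ x = f c x) ∧
      ∀ x, x ∉ l.flatMap vars → τ x = σ x := by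
  classical
  induction l with
  | nil => exact ⟨σ, by simp, fun x _ => rfl⟩
  | cons c t ih =>
    rw [List.flatMap_cons, List.nodup_append] at hnd
    obtain ⟨h1, h2, hdisj⟩ := hnd
    obtain ⟨τt, hτt1, hτt2⟩ := ih h2
    refine ⟨fun x => if x ∈ vars c then f c x else τt x, ?_, ?_⟩
    · rintro c' hc' x hx
      rcases List.mem_cons.1 hc' with rfl | hc'
      · simp [hx]
      · have hxt : x ∈ t.flatMap vars := List.mem_flatMap.2 ⟨c', hc', hx⟩
        have hxc : x ∉ vars c := fun h => hdisj _ h _ hxt rfl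
        simp only [if_neg hxc]
        exact hτt1 c' hc' x hx
    · intro x hx
      rw [List.flatMap_cons, List.mem_append] at hx
      push_neg at hx
      simp only [if_neg hx.1]
      exact hτt2 x hx.2

lemma countP_flatMap' (l : List (Fla X)) (p : X → Bool) :
    (l.flatMap vars).countP p = (l.map (fun c => (vars c).countP p)).sum := by
  induction l with
  | nil => rfl
  | cons c t ih => simp [List.flatMap_cons, List.countP_append, ih]

lemma countP_combined (σ : X → Bool) (f : Fla X → (X → Bool)) (l : List (Fla X))
    {τ : X → Bool} (h : ∀ c ∈ l, ∀ x ∈ vars c, τ x = f c x) :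
    (l.flatMap vars).countP (fun x => σ x != τ x) =
      (l.map (fun c => (vars c).countP (fun x => σ x != f c x))).sum := by
  induction l with
  | nil => rfl
  | cons c t ih =>
    rw [List.flatMap_cons, List.countP_append, List.map_cons, List.sum_cons,
      ih (fun c' hc' => h c' (by simp [hc']))]
    congr 1
    exact List.countP_congr fun x hx => by rw [h c (by simp) x hx]

/-- counting for a `τ` that differs from `σ` only inside `vars c`, where `c` sits
in the list at a known position. -/
lemma count_splice (L1 L2 : List (Fla X)) (c : Fla X)
    (hnd : (((L1 ++ c :: L2).flatMap vars)).Nodup) (σ τ : X → Bool)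
    (h : ∀ x, x ∉ vars c → τ x = σ x) :
    ((L1 ++ c :: L2).flatMap vars).countP (fun x => σ x != τ x) =
      (vars c).countP (fun x => σ x != τ x) := by
  rw [List.flatMap_append, List.flatMap_cons] at hnd ⊢
  rw [List.countP_append, List.countP_append]
  have hz : ∀ (A : List X), (∀ x ∈ A, x ∉ vars c) → A.countP (fun x => σ x != τ x) = 0 := by
    intro A hA
    rw [List.countP_eq_zero]
    intro x hx
    rw [h x (hA x hx)]
    simp
  rw [List.nodup_append] at hnd
  have hdisj1 : ∀ x ∈ L1.flatMap vars, x ∉ vars c := fun x hx hxc =>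
    hnd.2.2 _ hx _ (by rw [List.mem_append]; left; exact hxc) rfl
  have hnd2 := hnd.2.1
  rw [List.nodup_append] at hnd2
  have hdisj2 : ∀ x ∈ L2.flatMap vars, x ∉ vars c := fun x hx hxc => hnd2.2.2 _ hxc _ hx rfl
  rw [hz _ hdisj1, hz _ hdisj2]
  omega

lemma sat' {φ : Fla X} (hb : BasicF φ) : (vars φ).Nodup → ∀ σ : X → Bool,
    ∃ τ, eval τ φ = true ∧ ∀ x, x ∉ vars φ → τ x = σ x := by
  classical
  induction hb with
  | leaf x =>
    intro _ σ
    exact ⟨Function.update σ x true, by simp [eval], fun y hy =>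
      Function.update_of_ne (by simpa [vars] using hy) _ _⟩
  | neg x =>
    intro _ σ
    exact ⟨Function.update σ x false, by simp [eval], fun y hy =>
      Function.update_of_ne (by simpa [vars] using hy) _ _⟩
  | or l hlen hbs hno ih =>
    intro hro σ
    rw [vars_or'] at hro
    match l, hlen, hbs, ih with
    | c :: t, _, hbs, ih =>
      obtain ⟨τ, hτ, hτ2⟩ := ih c (by simp) (nodup_child hro (by simp)) σ
      refine ⟨τ, ?_, ?_⟩
      · rw [eval_or']
        exact List.any_eq_true.2 ⟨c, by simp, hτ⟩
      · intro x hx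
        refine hτ2 x fun h => hx ?_
        rw [vars_or']
        exact List.mem_flatMap.2 ⟨c, by simp, h⟩
  | and l hlen hbs hna ih =>
    intro hro σ
    rw [vars_and'] at hro
    have H : ∀ c ∈ l, ∃ τ, eval τ c = true ∧ ∀ x, x ∉ vars c → τ x = σ x :=
      fun c hc => ih c hc (nodup_child hro hc) σ
    choose! g hg1 hg2 using H
    obtain ⟨τ, hτ1, hτ2⟩ := combine' σ g l hro
    refine ⟨τ, ?_, ?_⟩
    · rw [eval_and', List.all_eq_true]
      intro c hc
      rw [eval_congr' (hbs c hc) (hτ1 c hc)]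
      exact hg1 c hc
    · intro x hx
      rw [vars_and'] at hx
      exact hτ2 x hx

lemma exists_heavy : ∀ (l : List (Fla X)), l ≠ [] → ∃ c ∈ l, ∀ w ∈ l, size w ≤ size c := by
  intro l
  induction l with
  | nil => intro h; exact absurd rfl h
  | cons a t ih =>
    intro _
    rcases eq_or_ne t [] with rfl | ht
    · exact ⟨a, by simp, by simp⟩
    · obtain ⟨c, hc, hmax⟩ := ih ht
      rcases le_total (size a) (size c) with h | h
      · refine ⟨c, by simp [hc], ?_⟩
        intro w hw
        rcases List.mem_cons.1 hw with rfl | hw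
        · exact h
        · exact hmax w hw
      · refine ⟨a, by simp, ?_⟩
        intro w hw
        rcases List.mem_cons.1 hw with rfl | hw
        · exact le_refl _
        · exact (hmax w hw).trans h

lemma getElem_mid (L1 L2 : List (Fla X)) (c : Fla X) :
    (L1 ++ c :: L2)[L1.length]? = some c := by
  rw [List.getElem?_append_right (le_refl _)]
  simp

lemma subAt_and_cons (l : List (Fla X)) {i : ℕ} {c : Fla X} (h : l[i]? = some c) (p : List ℕ) :
    subAt (.and l) (i :: p) = subAt c p := by
  rw [subAt]
  simp only [children, h]

lemma subAt_or_cons (l : List (Fla X)) {i : ℕ} {c : Fla X} (h : l[i]? = some c) (p : List ℕ) :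
    subAt (.or l) (i :: p) = subAt c p := by
  rw [subAt]
  simp only [children, h]

end Fla
namespace Fla
variable {X : Type}

lemma count_splice' {l : List (Fla X)} {c : Fla X} (hc : c ∈ l)
    (hnd : (l.flatMap vars).Nodup) (σ τ : X → Bool)
    (h : ∀ x, x ∉ vars c → τ x = σ x) :
    (l.flatMap vars).countP (fun x => σ x != τ x) =
      (vars c).countP (fun x => σ x != τ x) := by
  obtain ⟨s, t, rfl⟩ := List.append_of_mem hc
  exact count_splice s t c hnd σ τ h

lemma far_child_and (l : List (Fla X)) (hbs : ∀ c ∈ l, BasicF c) (hne : l ≠ [])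
    (hnd : (l.flatMap vars).Nodup) (σ : X → Bool) {δ : ℝ} (hδ : 0 < δ)
    (hS : 0 < size (Fla.and l))
    (hfar : EpsFar (.and l) true σ δ) : ∃ c ∈ l, EpsFar c true σ δ := by
  classical
  by_contra hcon
  push_neg at hcon
  have h' : ∀ c ∈ l, ∃ σ', eval σ' c = true ∧
      ((vars c).countP (fun x => σ x != σ' x) : ℝ) < δ * size c := by
    intro c hc
    have h1 := hcon c hc
    rw [EpsFar] at h1
    push_neg at h1
    obtain ⟨σ', hs, hlt⟩ := h1
    have hspos : (0:ℝ) < size c := by exact_mod_cast size_pos' (hbs c hc)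
    rw [hamming] at hlt
    exact ⟨σ', hs, (div_lt_iff₀ hspos).1 hlt⟩
  choose! g hg1 hg2 using h'
  obtain ⟨τ, hτ1, hτ2⟩ := combine' σ g l hnd
  have heval : eval τ (.and l) = true := by
    rw [eval_and', List.all_eq_true]
    intro c hc
    rw [eval_congr' (hbs c hc) (hτ1 c hc)]
    exact hg1 c hc
  have hcount := countP_combined σ g l hτ1
  have hkey := hfar τ heval
  rw [hamming, vars_and', hcount] at hkey
  have hSpos : (0:ℝ) < (size (Fla.and l) : ℝ) := by exact_mod_cast hS
  rw [le_div_iff₀ hSpos] at hkey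
  -- hkey : δ * S ≤ (sum of counts : ℝ)
  have hlt : ((l.map (fun c => (vars c).countP (fun x => σ x != g c x))).sum : ℝ) <
      δ * (size (Fla.and l) : ℝ) := by
    rw [size_and']
    rw [Nat.cast_list_sum, Nat.cast_list_sum, List.map_map, List.map_map]
    have hsum : ((l.map (Nat.cast ∘ fun c => (vars c).countP (fun x => σ x != g c x))).sum : ℝ) <
        (l.map (fun c => δ * (size c : ℝ))).sum := by
      apply List.sum_lt_sum
      · intro c hc
        exact (hg2 c hc).le
      · match l, hne with
        | c :: t, _ => exact ⟨c, by simp, hg2 c (by simp)⟩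
    refine hsum.trans_le (le_of_eq ?_)
    rw [← List.sum_map_mul_left]
    congr 1
  linarith

lemma or_heavy_far (L1 L2 : List (Fla X)) (c : Fla X)
    (hbs : ∀ w ∈ L1 ++ c :: L2, BasicF w) (hlen : 2 ≤ (L1 ++ c :: L2).length)
    (hnd : ((L1 ++ c :: L2).flatMap vars).Nodup)
    (σ : X → Bool) {δ e : ℝ} (he : 0 < e) (hδ : e ≤ δ)
    (hfar : EpsFar (.or (L1 ++ c :: L2)) true σ δ) :
    EpsFar c true σ (δ * (1 + e)) := by
  classical
  have hδpos : 0 < δ := lt_of_lt_of_le he hδ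
  have hcl : c ∈ L1 ++ c :: L2 := by simp
  -- a sibling
  have hsib : ∃ c', c' ∈ L1 ++ L2 := by
    apply List.exists_mem_of_length_pos
    have := hlen
    simp only [List.length_append, List.length_cons] at this ⊢
    omega
  obtain ⟨c', hc'⟩ := hsib
  have hc'l : c' ∈ L1 ++ c :: L2 := by
    rcases List.mem_append.1 hc' with h | h
    · exact List.mem_append.2 (Or.inl h)
    · exact List.mem_append.2 (Or.inr (List.mem_cons_of_mem _ h))
  -- sizes (ℕ)
  have hSsum : size (Fla.or (L1 ++ c :: L2)) = (L1.map size).sum + size c + (L2.map size).sum := by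
    rw [size_or', List.map_append, List.sum_append, List.map_cons, List.sum_cons]
    omega
  have hc'size : size c' ≤ (L1.map size).sum + (L2.map size).sum := by
    rcases List.mem_append.1 hc' with h | h
    · have : size c' ≤ (L1.map size).sum :=
        List.single_le_sum (fun x _ => Nat.zero_le x) _ (List.mem_map_of_mem (f := size) h)
      omega
    · have : size c' ≤ (L2.map size).sum :=
        List.single_le_sum (fun x _ => Nat.zero_le x) _ (List.mem_map_of_mem (f := size) h)
      omega
  have hssum : size c + size c' ≤ size (Fla.or (L1 ++ c :: L2)) := by omega
  have hspos : 0 < size c := size_pos' (hbs c hcl)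
  have hSpos : (0:ℝ) < (size (Fla.or (L1 ++ c :: L2)) : ℝ) := by
    have : 0 < size (Fla.or (L1 ++ c :: L2)) := by omega
    exact_mod_cast this
  -- bound δ·S ≤ size c' via satisfying the sibling
  obtain ⟨τ', hτ'1, hτ'2⟩ := sat' (hbs c' hc'l) (nodup_child hnd hc'l) σ
  have hevalτ' : eval τ' (.or (L1 ++ c :: L2)) = true := by
    rw [eval_or']
    exact List.any_eq_true.2 ⟨c', hc'l, hτ'1⟩
  have h1 := hfar τ' hevalτ'
  rw [hamming, vars_or', count_splice' hc'l hnd σ τ' hτ'2, le_div_iff₀ hSpos] at h1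
  have hc'len : ((vars c').countP (fun x => σ x != τ' x) : ℝ) ≤ (size c' : ℝ) := by
    exact_mod_cast List.countP_le_length
  -- main: arbitrary satisfying assignment for c
  intro σ' hσ'
  set τ : X → Bool := fun x => if x ∈ vars c then σ' x else σ x with hτdef
  have hτeq : ∀ x ∈ vars c, τ x = σ' x := fun x hx => if_pos hx
  have hτeq2 : ∀ x, x ∉ vars c → τ x = σ x := fun x hx => if_neg hx
  have hevalc : eval τ c = eval σ' c := eval_congr' (hbs c hcl) hτeq
  have heval : eval τ (.or (L1 ++ c :: L2)) = true := by
    rw [eval_or']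
    exact List.any_eq_true.2 ⟨c, hcl, by rw [hevalc, hσ']⟩
  have h2 := hfar τ heval
  rw [hamming, vars_or', count_splice' hcl hnd σ τ hτeq2, le_div_iff₀ hSpos] at h2
  have hmid : (vars c).countP (fun x => σ x != τ x) = (vars c).countP (fun x => σ x != σ' x) :=
    List.countP_congr fun x hx => by rw [hτeq x hx]
  rw [hmid] at h2
  -- conclude by algebra
  rw [hamming]
  have hspos' : (0:ℝ) < (size c : ℝ) := by exact_mod_cast hspos
  rw [le_div_iff₀ hspos']
  set m : ℝ := ((vars c).countP (fun x => σ x != σ' x) : ℝ)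
  set S : ℝ := (size (Fla.or (L1 ++ c :: L2)) : ℝ)
  set s : ℝ := (size c : ℝ)
  set s' : ℝ := (size c' : ℝ)
  have hss' : s + s' ≤ S := by
    simp only [S, s, s']
    exact_mod_cast hssum
  have hδs' : δ * S ≤ s' := h1.trans hc'len
  have hs'0 : (0:ℝ) ≤ s' := by positivity
  -- δ(1+e)s ≤ δs + δδs ≤ δs + δ(δS) ≤ δs + δs' ≤ δS ≤ m
  nlinarith [mul_le_mul_of_nonneg_left hδs' hδpos.le, mul_le_mul_of_nonneg_left hss' hδpos.le,
    mul_le_mul_of_nonneg_right hδ (mul_nonneg hδpos.le hspos'.le),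
    mul_le_mul_of_nonneg_left (le_trans (by linarith : s ≤ S) (le_refl S)) (mul_nonneg hδpos.le hδpos.le)]

end Fla
namespace Fla
variable {X : Type}

lemma subAt_nil (φ : Fla X) : subAt φ [] = some φ := rfl

lemma descend {ε : ℝ} (hε : 0 < ε) (σ : X → Bool) :
    ∀ {φ : Fla X}, BasicF φ → ∀ (δ : ℝ) (d j : ℕ),
    ReadOnce φ →
    2 * ε / 3 * (1 + 2 * ε / 3) ^ j ≤ δ →
    (isAnd φ → d ≤ 3 * j + 1) → d ≤ 3 * j + 2 →
    EpsFar φ true σ δ →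
    ∃ p : List ℕ,
      (∃ x : X, subAt φ p = some (Fla.leaf x) ∨ subAt φ p = some (Fla.neg x)) ∧
      ∀ q : List ℕ, q <+: p →
        (∀ ψ, subAt φ q = some ψ →
          EpsFar ψ true σ (2 * ε / 3 * (1 + 2 * ε / 3) ^ ((d + q.length) / 3))) ∧
        (q ≠ p → ∀ l, subAt φ q = some (Fla.or l) →
          ∃ i rest c, p = q ++ i :: rest ∧ l[i]? = some c ∧ ∀ w ∈ l, size w ≤ size c) := by
  have he : (0:ℝ) < 2 * ε / 3 := by linarith
  have hone : (1:ℝ) ≤ 1 + 2 * ε / 3 := by linarith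
  have hbound : ∀ {δ : ℝ} {j d : ℕ}, 2 * ε / 3 * (1 + 2 * ε / 3) ^ j ≤ δ → d ≤ 3 * j + 2 →
      2 * ε / 3 * (1 + 2 * ε / 3) ^ (d / 3) ≤ δ := by
    intro δ j d hj hd
    have hd3 : d / 3 ≤ j := by omega
    have hp : (1 + 2 * ε / 3) ^ (d / 3) ≤ (1 + 2 * ε / 3) ^ j :=
      pow_le_pow_right₀ hone hd3
    calc 2 * ε / 3 * (1 + 2 * ε / 3) ^ (d / 3)
        ≤ 2 * ε / 3 * (1 + 2 * ε / 3) ^ j := by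
          exact mul_le_mul_of_nonneg_left hp he.le
      _ ≤ δ := hj
  intro φ hb
  induction hb with
  | leaf x =>
    intro δ d j _ hj _ hd hfar
    refine ⟨[], ⟨x, Or.inl rfl⟩, ?_⟩
    intro q hq
    have hq0 : q = [] := List.prefix_nil.1 hq
    subst hq0
    refine ⟨?_, fun h => absurd rfl h⟩
    intro ψ hψ
    rw [subAt_nil, Option.some.injEq] at hψ
    subst hψ
    exact epsFar_mono (by simpa using hbound hj hd) hfar
  | neg x =>
    intro δ d j _ hj _ hd hfar
    refine ⟨[], ⟨x, Or.inr rfl⟩, ?_⟩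
    intro q hq
    have hq0 : q = [] := List.prefix_nil.1 hq
    subst hq0
    refine ⟨?_, fun h => absurd rfl h⟩
    intro ψ hψ
    rw [subAt_nil, Option.some.injEq] at hψ
    subst hψ
    exact epsFar_mono (by simpa using hbound hj hd) hfar
  | and l hlen hbs hna ih =>
    intro δ d j hro hj hA hd hfar
    have hδpos : 0 < δ := lt_of_lt_of_le (by positivity) hj
    have hro' : (l.flatMap vars).Nodup := by rw [ReadOnce, vars_and'] at hro; exact hro
    have hne : l ≠ [] := by intro h; subst h; simp at hlen
    obtain ⟨c, hc, hcfar⟩ := far_child_and l hbs hne hro' σ hδpos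
      (size_pos' (.and l hlen hbs hna)) hfar
    have hdA : d ≤ 3 * j + 1 := hA trivial
    obtain ⟨p', hp'leaf, hp'chain⟩ := ih c hc δ (d + 1) j (nodup_child hro' hc) hj
      (fun h => absurd h (hna c hc)) (by omega) hcfar
    obtain ⟨L1, L2, rfl⟩ := List.append_of_mem hc
    have hget : (L1 ++ c :: L2)[L1.length]? = some c := getElem_mid L1 L2 c
    refine ⟨L1.length :: p', ?_, ?_⟩
    · obtain ⟨x, hx⟩ := hp'leaf
      exact ⟨x, by rwa [subAt_and_cons _ hget]⟩
    · intro q hq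
      match q, hq with
      | [], _ =>
        constructor
        · intro ψ hψ
          rw [subAt_nil, Option.some.injEq] at hψ
          subst hψ
          exact epsFar_mono (by simpa using hbound hj hd) hfar
        · intro _ l' hl'
          rw [subAt_nil, Option.some.injEq] at hl'
          exact absurd hl' (by simp)
      | i :: q', hq =>
        obtain ⟨r, hr⟩ := hq
        rw [List.cons_append] at hr
        injection hr with h1 h2
        subst h1
        have hq' : q' <+: p' := ⟨r, h2⟩
        have hmain := hp'chain q' hq'
        constructor
        · intro ψ hψ
          rw [subAt_and_cons _ hget] at hψ
          have h3 := hmain.1 ψ hψ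
          have heq : d + (L1.length :: q').length = d + 1 + q'.length := by
            rw [List.length_cons]; omega
          rw [heq]
          exact h3
        · intro hne' l' hl'
          rw [subAt_and_cons _ hget] at hl'
          have hne'' : q' ≠ p' := fun h => hne' (by rw [h])
          obtain ⟨i2, rest, c2, hp2, hg2, hm2⟩ := hmain.2 hne'' l' hl'
          exact ⟨i2, rest, c2, by rw [hp2, List.cons_append], hg2, hm2⟩
  | or l hlen hbs hno ih =>
    intro δ d j hro hj hA hd hfar
    have hpow1 : (1:ℝ) ≤ (1 + 2 * ε / 3) ^ j := one_le_pow₀ hone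
    have heδ : 2 * ε / 3 ≤ δ := le_trans (by nlinarith) hj
    have hro' : (l.flatMap vars).Nodup := by rw [ReadOnce, vars_or'] at hro; exact hro
    have hne : l ≠ [] := by intro h; subst h; simp at hlen
    obtain ⟨c, hc, hmax⟩ := exists_heavy l hne
    obtain ⟨L1, L2, rfl⟩ := List.append_of_mem hc
    have hget : (L1 ++ c :: L2)[L1.length]? = some c := getElem_mid L1 L2 c
    have hcfar : EpsFar c true σ (δ * (1 + 2 * ε / 3)) :=
      or_heavy_far L1 L2 c hbs hlen hro' σ he heδ hfar
    have hj' : 2 * ε / 3 * (1 + 2 * ε / 3) ^ (j + 1) ≤ δ * (1 + 2 * ε / 3) := by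
      rw [pow_succ, ← mul_assoc]
      exact mul_le_mul_of_nonneg_right hj (by linarith)
    obtain ⟨p', hp'leaf, hp'chain⟩ := ih c hc (δ * (1 + 2 * ε / 3)) (d + 1) (j + 1)
      (nodup_child hro' hc) hj' (fun _ => by omega) (by omega) hcfar
    refine ⟨L1.length :: p', ?_, ?_⟩
    · obtain ⟨x, hx⟩ := hp'leaf
      exact ⟨x, by rwa [subAt_or_cons _ hget]⟩
    · intro q hq
      match q, hq with
      | [], _ =>
        constructor
        · intro ψ hψ
          rw [subAt_nil, Option.some.injEq] at hψ
          subst hψ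
          exact epsFar_mono (by simpa using hbound hj hd) hfar
        · intro _ l' hl'
          rw [subAt_nil, Option.some.injEq, Fla.or.injEq] at hl'
          subst hl'
          exact ⟨L1.length, p', c, rfl, hget, hmax⟩
      | i :: q', hq =>
        obtain ⟨r, hr⟩ := hq
        rw [List.cons_append] at hr
        injection hr with h1 h2
        subst h1
        have hq' : q' <+: p' := ⟨r, h2⟩
        have hmain := hp'chain q' hq'
        constructor
        · intro ψ hψ
          rw [subAt_or_cons _ hget] at hψ
          have h3 := hmain.1 ψ hψ
          have heq : d + (L1.length :: q').length = d + 1 + q'.length := by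
            rw [List.length_cons]; omega
          rw [heq]
          exact h3
        · intro hne' l' hl'
          rw [subAt_or_cons _ hget] at hl'
          have hne'' : q' ≠ p' := fun h => hne' (by rw [h])
          obtain ⟨i2, rest, c2, hp2, hg2, hm2⟩ := hmain.2 hne'' l' hl'
          exact ⟨i2, rest, c2, by rw [hp2, List.cons_append], hg2, hm2⟩

end Fla
open Fla in
/-- if a basic read-once formula has no `(ε,σ)`-critical
vertex, then `σ` is `(2ε/3)`-close to satisfying it. -/
theorem no_critical_implies_close {X : Type} (Φ : Fla X) (hb : BasicF Φ)
    (hro : Φ.ReadOnce) (σ : X → Bool) (ε : ℝ) (hε : 0 < ε)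
    (hnone : ∀ p : List ℕ, ¬ Critical Φ σ ε p) :
    EpsClose Φ true σ (2 * ε / 3) := by
  classical
  by_contra hclose
  have he : (0:ℝ) < 2 * ε / 3 := by linarith
  have hfar : EpsFar Φ true σ (2 * ε / 3) := by
    intro σ' hs
    by_contra hlt
    push_neg at hlt
    exact hclose ⟨σ', hs, hlt.le⟩
  have heval : eval σ Φ = false := by
    cases h : eval σ Φ
    · rfl
    · exfalso
      apply hclose
      refine ⟨σ, h, ?_⟩
      rw [hamming]
      have hc0 : (vars Φ).countP (fun x => σ x != σ x) = 0 := by simp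
      rw [hc0]
      simp only [Nat.cast_zero, zero_div]
      linarith
  obtain ⟨p, hleaf, hchain⟩ := descend hε σ hb (2 * ε / 3) 0 0 hro
    (by rw [pow_zero, mul_one]) (fun _ => by omega) (by omega) hfar
  apply hnone p
  refine ⟨⟨?_, heval, ?_⟩, hleaf⟩
  · obtain ⟨x, hx | hx⟩ := hleaf
    · exact ⟨_, hx⟩
    · exact ⟨_, hx⟩
  · intro q hq
    have hch := hchain q hq
    refine ⟨?_, hch.2⟩
    intro ψ hψ
    have h2 := hch.1 ψ hψ
    simpa using h2
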